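/- Let d ≥ 2, α ∈ (1,2), n ∈ ℕ, and x₁, …, x_d ≥ 0. Then α^d · ∑ over all (j₁,…,j_d) ∈ ℕ₀^d with j₁+⋯+j_d = n of [Γ(αn+1)/(Γ(αj₁+1)⋯Γ(αj_d+1))] · x₁^{αj₁} ⋯ x_d^{αj_d} ≥ (x₁+⋯+x_d)^{αn}. -/

import Mathlib

private lemma gpos' {α : ℝ} (hα : 0 < α) (m : ℕ) : 0 < Real.Gamma (α * m + 1) := by
  apply Real.Gamma_pos_of_pos
  have : (0:ℝ) ≤ α * m := mul_nonneg hα.le (Nat.cast_nonneg m)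
  linarith

private lemma aux_neo (α : ℝ) (hα1 : 1 < α)
    (hneo : ∀ (n : ℕ) (x y : ℝ), 0 ≤ x → 0 ≤ y →
      (x + y) ^ (α * (n : ℝ)) ≤
        α * ∑ j ∈ Finset.range (n + 1),
          (Real.Gamma (α * n + 1) /
            (Real.Gamma (α * j + 1) * Real.Gamma (α * ((n : ℝ) - (j : ℝ)) + 1))) *
            x ^ (α * (j : ℝ)) * y ^ (α * ((n : ℝ) - (j : ℝ)))) :
    ∀ (d n : ℕ) (x : Fin (d+1) → ℝ), (∀ i, 0 ≤ x i) →
      (∑ i, x i) ^ (α * (n : ℝ)) ≤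
        α ^ (d+1) * ∑ j ∈ (Fintype.piFinset fun _ : Fin (d+1) => Finset.range (n + 1)).filter
            (fun j => ∑ i, j i = n),
          (Real.Gamma (α * n + 1) / ∏ i, Real.Gamma (α * (j i : ℝ) + 1)) *
            ∏ i, (x i) ^ (α * (j i : ℝ)) := by
  have hα0 : (0:ℝ) < α := lt_trans one_pos hα1
  intro d
  induction d with
  | zero =>
    intro n x hx
    have hset : (Fintype.piFinset fun _ : Fin 1 => Finset.range (n + 1)).filter
        (fun j => ∑ i, j i = n) = {fun _ => n} := by
      ext j
      simp only [Finset.mem_filter, Fintype.mem_piFinset, Finset.mem_range,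
        Finset.mem_singleton, Fin.sum_univ_one]
      constructor
      · rintro ⟨-, h⟩
        funext i
        rw [Subsingleton.elim i 0, h]
      · rintro rfl
        exact ⟨fun i => Nat.lt_succ_self n, rfl⟩
    rw [hset, Finset.sum_singleton, Fin.sum_univ_one]
    simp only [Fin.prod_univ_succ, Fin.prod_univ_zero, mul_one, one_mul]
    rw [div_self (gpos' hα0 n).ne', one_mul, pow_one]
    have h0 := Real.rpow_nonneg (hx 0) (α * n)
    nlinarith
  | succ d ih =>
    intro n x hx
    have hz : 0 ≤ x (Fin.last (d+1)) := hx _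
    have hs0 : 0 ≤ ∑ i : Fin (d+1), x i.castSucc := Finset.sum_nonneg fun i _ => hx _
    have hCpos : ∀ j : ℕ, j ≤ n → 0 ≤ Real.Gamma (α * n + 1) /
        (Real.Gamma (α * j + 1) * Real.Gamma (α * ((n:ℝ) - (j:ℝ)) + 1)) := by
      intro j hj
      have h1 := gpos' hα0 n
      have h2 := gpos' hα0 j
      have h3 : (0:ℝ) < Real.Gamma (α * ((n:ℝ) - (j:ℝ)) + 1) := by
        have hc : ((n - j : ℕ) : ℝ) = (n:ℝ) - j := by
          rw [Nat.cast_sub hj]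
        rw [← hc]; exact gpos' hα0 (n - j)
      positivity
    rw [Fin.sum_univ_castSucc x]
    refine (hneo n _ _ hs0 hz).trans ?_
    calc α * ∑ j ∈ Finset.range (n + 1),
          (Real.Gamma (α * n + 1) /
            (Real.Gamma (α * j + 1) * Real.Gamma (α * ((n : ℝ) - (j : ℝ)) + 1))) *
            (∑ i : Fin (d+1), x i.castSucc) ^ (α * (j : ℝ)) *
            (x (Fin.last (d+1))) ^ (α * ((n : ℝ) - (j : ℝ)))
        ≤ α * ∑ j ∈ Finset.range (n + 1),
          (Real.Gamma (α * n + 1) /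
            (Real.Gamma (α * j + 1) * Real.Gamma (α * ((n : ℝ) - (j : ℝ)) + 1))) *
            (α ^ (d+1) * ∑ k ∈ (Fintype.piFinset fun _ : Fin (d+1) => Finset.range (j + 1)).filter
                (fun k => ∑ i, k i = j),
              (Real.Gamma (α * j + 1) / ∏ i, Real.Gamma (α * (k i : ℝ) + 1)) *
                ∏ i, (x i.castSucc) ^ (α * (k i : ℝ))) *
            (x (Fin.last (d+1))) ^ (α * ((n : ℝ) - (j : ℝ))) := by
          refine mul_le_mul_of_nonneg_left (Finset.sum_le_sum ?_) hα0.le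
          intro j hj
          have hjn : j ≤ n := Nat.lt_succ_iff.mp (Finset.mem_range.mp hj)
          exact mul_le_mul_of_nonneg_right
            (mul_le_mul_of_nonneg_left (ih j (fun i => x i.castSucc) (fun i => hx _))
              (hCpos j hjn))
            (Real.rpow_nonneg hz _)
      _ = α ^ (d+1+1) * ∑ j ∈ Finset.range (n + 1),
            ∑ k ∈ (Fintype.piFinset fun _ : Fin (d+1) => Finset.range (j + 1)).filter
                (fun k => ∑ i, k i = j),
              (Real.Gamma (α * n + 1) /
                (Real.Gamma (α * j + 1) * Real.Gamma (α * ((n : ℝ) - (j : ℝ)) + 1))) *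
                ((Real.Gamma (α * j + 1) / ∏ i, Real.Gamma (α * (k i : ℝ) + 1)) *
                  ∏ i, (x i.castSucc) ^ (α * (k i : ℝ))) *
                (x (Fin.last (d+1))) ^ (α * ((n : ℝ) - (j : ℝ))) := by
          conv_rhs => rw [pow_succ', mul_assoc, Finset.mul_sum]
          congr 1
          refine Finset.sum_congr rfl fun j _ => ?_
          simp only [Finset.mul_sum, Finset.sum_mul]
          exact Finset.sum_congr rfl fun k _ => by ring
      _ = α ^ (d+1+1) * ∑ j ∈ (Fintype.piFinset fun _ : Fin (d+1+1) => Finset.range (n + 1)).filter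
            (fun j => ∑ i, j i = n),
          (Real.Gamma (α * n + 1) / ∏ i, Real.Gamma (α * (j i : ℝ) + 1)) *
            ∏ i, (x i) ^ (α * (j i : ℝ)) := by
          congr 1
          rw [Finset.sum_sigma']
          refine Finset.sum_nbij' (fun p => Fin.snoc p.2 (n - p.1))
            (fun q => ⟨n - q (Fin.last (d+1)), fun i => q i.castSucc⟩) ?_ ?_ ?_ ?_ ?_
          · rintro ⟨j, k⟩ hp
            simp only [Finset.mem_sigma, Finset.mem_range, Nat.lt_succ_iff, Finset.mem_filter,
              Fintype.mem_piFinset] at hp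
            obtain ⟨hjn, hkmem, hksum⟩ := hp
            rw [Finset.mem_filter, Fintype.mem_piFinset]
            constructor
            · intro i
              refine Fin.lastCases ?_ ?_ i
              · simp only [Fin.snoc_last, Finset.mem_range]; omega
              · intro i'
                simp only [Fin.snoc_castSucc, Finset.mem_range]
                have := hkmem i'
                omega
            · rw [Fin.sum_univ_castSucc]
              simp only [Fin.snoc_castSucc, Fin.snoc_last, hksum]
              omega
          · intro q hq
            simp only [Finset.mem_filter, Fintype.mem_piFinset, Finset.mem_range] at hq
            obtain ⟨hqmem, hqsum⟩ := hq
            have hsum' : (∑ i : Fin (d+1), q i.castSucc) + q (Fin.last (d+1)) = n := by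
              rw [← Fin.sum_univ_castSucc]; exact hqsum
            simp only [Finset.mem_sigma, Finset.mem_range, Finset.mem_filter,
              Fintype.mem_piFinset]
            refine ⟨by omega, fun i => ?_, by omega⟩
            have hle : q i.castSucc ≤ ∑ i' : Fin (d+1), q i'.castSucc :=
              Finset.single_le_sum (f := fun i' : Fin (d+1) => q i'.castSucc)
                (fun i' _ => Nat.zero_le _) (Finset.mem_univ i)
            omega
          · rintro ⟨j, k⟩ hp
            simp only [Finset.mem_sigma, Finset.mem_range, Nat.lt_succ_iff] at hp
            obtain ⟨hjn, -⟩ := hp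
            have hnj : n - (n - j) = j := by omega
            simp [Fin.snoc_last, Fin.snoc_castSucc, hnj]
          · intro q hq
            simp only [Finset.mem_filter, Fintype.mem_piFinset, Finset.mem_range] at hq
            obtain ⟨hqmem, hqsum⟩ := hq
            have hle : q (Fin.last (d+1)) ≤ n := by have := hqmem (Fin.last (d+1)); omega
            simp only [Nat.sub_sub_self hle]
            exact Fin.snoc_init_self q
          · rintro ⟨j, k⟩ hp
            simp only [Finset.mem_sigma, Finset.mem_range, Nat.lt_succ_iff] at hp
            obtain ⟨hjn, -⟩ := hp
            have hcast : ((n - j : ℕ) : ℝ) = (n:ℝ) - (j:ℝ) := by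
              rw [Nat.cast_sub hjn]
            have hG : ∏ i : Fin (d+1+1), Real.Gamma (α * ((Fin.snoc k (n - j) : Fin (d+1+1) → ℕ) i : ℝ) + 1)
                = (∏ i : Fin (d+1), Real.Gamma (α * (k i : ℝ) + 1)) *
                  Real.Gamma (α * ((n:ℝ) - (j:ℝ)) + 1) := by
              rw [Fin.prod_univ_castSucc]
              simp only [Fin.snoc_castSucc, Fin.snoc_last, hcast]
            have hX : ∏ i : Fin (d+1+1), (x i) ^ (α * ((Fin.snoc k (n - j) : Fin (d+1+1) → ℕ) i : ℝ))
                = (∏ i : Fin (d+1), (x i.castSucc) ^ (α * (k i : ℝ))) *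
                  (x (Fin.last (d+1))) ^ (α * ((n:ℝ) - (j:ℝ))) := by
              rw [Fin.prod_univ_castSucc]
              simp only [Fin.snoc_castSucc, Fin.snoc_last, hcast]
            rw [hG, hX]
            have g1 := (gpos' hα0 j).ne'
            have g2 : Real.Gamma (α * ((n:ℝ) - (j:ℝ)) + 1) ≠ 0 := by
              rw [← hcast]; exact (gpos' hα0 (n - j)).ne'
            have g3 : (∏ i : Fin (d+1), Real.Gamma (α * (k i : ℝ) + 1)) ≠ 0 :=
              Finset.prod_ne_zero_iff.mpr fun i _ => (gpos' hα0 (k i)).ne'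
            field_simp

/-- Reversed multivariate neo-classical inequality for `α ∈ (1,2)`, assuming the
reversed two-variable neo-classical inequality as a hypothesis. -/
theorem multivariate_neo_classical_reversed (d : ℕ) (hd : 2 ≤ d)
    (α : ℝ) (hα1 : 1 < α) (hα2 : α < 2)
    (hneo : ∀ (n : ℕ) (x y : ℝ), 0 ≤ x → 0 ≤ y →
      (x + y) ^ (α * (n : ℝ)) ≤
        α * ∑ j ∈ Finset.range (n + 1),
          (Real.Gamma (α * n + 1) /
            (Real.Gamma (α * j + 1) * Real.Gamma (α * ((n : ℝ) - (j : ℝ)) + 1))) *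
            x ^ (α * (j : ℝ)) * y ^ (α * ((n : ℝ) - (j : ℝ))))
    (n : ℕ) (x : Fin d → ℝ) (hx : ∀ i, 0 ≤ x i) :
    (∑ i, x i) ^ (α * (n : ℝ)) ≤
      α ^ d * ∑ j ∈ (Fintype.piFinset fun _ : Fin d => Finset.range (n + 1)).filter
          (fun j => ∑ i, j i = n),
        (Real.Gamma (α * n + 1) / ∏ i, Real.Gamma (α * (j i : ℝ) + 1)) *
          ∏ i, (x i) ^ (α * (j i : ℝ)) := by
  obtain ⟨e, rfl⟩ : ∃ e, d = e + 1 := ⟨d - 1, by omega⟩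
  exact aux_neo α hα1 hneo e n x hx
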